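/- Let r ≥ 1 and s ≥ 1 be integers, g = (r+1)(s+1), d = r(s+2), and ξ = 3(g−1) + (r−1)(g+r+1)(3g−2d+r−3)/(g−d+2r+1) ∈ ℚ. Define the rational numbers Aλ = d(gd−2g²+8d−8g+4)/((g−1)(g−2)), A₀ = d(2g²−gd+3g−4d−2)/(6(g−1)(g−2)), Bλ = 6d/(g−1), B₀ = −d/(2(g−1)), Cλ = (5r(r+2)−(g+3)ξ)/(2(g−1)(g−2)), C₀ = ((g+1)ξ−3r(r+2))/(12(g−1)(g−2)). Set P = ((r+1)/2)(−Aλ + Bλ) + (d+1−g)·Cλ − r and Q = ((r+1)/2)(−A₀ + B₀) + (d+1−g)·C₀. Then Q ≠ 0 and P/(−Q) = 6(2x + 7y² + 7xy + xy² + 12y + y³)/(y(4+y)(y+1+x)), where x = (r+1)+(s+1) and y = (r+1)(s+1). -/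

import Mathlib

set_option maxHeartbeats 4000000 in
/-- The slope of the Gieseker–Petri divisor.  With g = (r+1)(s+1), d = r(s+2),
ξ and the λ- and δ₀-coefficients Alam, A0, Blam, B0, Clam, C0 of the
pushforwards of the tautological classes as in the main theorem, and
P = ((r+1)/2)(−Alam+Blam) + (d+1−g)Clam − r,
Q = ((r+1)/2)(−A0+B0) + (d+1−g)C0,
we have Q ≠ 0 and P/(−Q) = 6(2x+7y²+7xy+xy²+12y+y³)/(y(4+y)(y+1+x)) where
x = (r+1)+(s+1), y = (r+1)(s+1). -/
theorem gieseker_petri_slope (r s : ℤ) (hr : 1 ≤ r) (hs : 1 ≤ s)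
    (g d x y ξ Alam A0 Blam B0 Clam C0 P Q : ℚ)
    (hg : g = ((r : ℚ) + 1) * ((s : ℚ) + 1))
    (hd : d = (r : ℚ) * ((s : ℚ) + 2))
    (hx : x = ((r : ℚ) + 1) + ((s : ℚ) + 1))
    (hy : y = ((r : ℚ) + 1) * ((s : ℚ) + 1))
    (hxi : ξ = 3 * (g - 1) +
      ((r : ℚ) - 1) * (g + (r : ℚ) + 1) * (3 * g - 2 * d + (r : ℚ) - 3) /
        (g - d + 2 * (r : ℚ) + 1))
    (hAlam : Alam = d * (g * d - 2 * g ^ 2 + 8 * d - 8 * g + 4) /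
      ((g - 1) * (g - 2)))
    (hA0 : A0 = d * (2 * g ^ 2 - g * d + 3 * g - 4 * d - 2) /
      (6 * (g - 1) * (g - 2)))
    (hBlam : Blam = 6 * d / (g - 1))
    (hB0 : B0 = -d / (2 * (g - 1)))
    (hClam : Clam = (5 * (r : ℚ) * ((r : ℚ) + 2) - (g + 3) * ξ) /
      (2 * (g - 1) * (g - 2)))
    (hC0 : C0 = ((g + 1) * ξ - 3 * (r : ℚ) * ((r : ℚ) + 2)) /
      (12 * (g - 1) * (g - 2)))
    (hP : P = (((r : ℚ) + 1) / 2) * (-Alam + Blam) + (d + 1 - g) * Clam - (r : ℚ))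
    (hQ : Q = (((r : ℚ) + 1) / 2) * (-A0 + B0) + (d + 1 - g) * C0) :
    Q ≠ 0 ∧
    P / (-Q) = 6 * (2 * x + 7 * y ^ 2 + 7 * x * y + x * y ^ 2 + 12 * y + y ^ 3) /
      (y * (4 + y) * (y + 1 + x)) := by
  have hR : (1:ℚ) ≤ (r:ℚ) := by exact_mod_cast hr
  have hS : (1:ℚ) ≤ (s:ℚ) := by exact_mod_cast hs
  have hR0 : (0:ℚ) < (r:ℚ) := lt_of_lt_of_le one_pos hR
  have hS0 : (0:ℚ) < (s:ℚ) := lt_of_lt_of_le one_pos hS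
  set R := (r:ℚ) with hRdef
  set S := (s:ℚ) with hSdef
  have hg1 : g - 1 ≠ 0 := by rw [hg]; nlinarith
  have hg2 : g - 2 ≠ 0 := by rw [hg]; nlinarith
  have hgd : g - d + 2 * R + 1 ≠ 0 := by rw [hg, hd]; nlinarith
  have hyne : y ≠ 0 := by rw [hy]; positivity
  have hy4 : 4 + y ≠ 0 := by rw [hy]; positivity
  have hyx : y + 1 + x ≠ 0 := by rw [hy, hx]; positivity
  have hQval : Q = -(R * S * (20 + 34*S + 16*S^2 + 2*S^3 + 34*R + 61*R*S
      + 32*R*S^2 + 5*R*S^3 + 16*R^2 + 32*R^2*S + 20*R^2*S^2 + 4*R^2*S^3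
      + 2*R^3 + 5*R^3*S + 4*R^3*S^2 + R^3*S^3))
      / (6 * (g - 1) * (g - 2) * (R + S + 2)) := by
    have hg1' := hg1; have hg2' := hg2; have hgd' := hgd
    simp only [hg, hd] at hg1' hg2' hgd'
    have hRS : R + S + 2 ≠ 0 := by positivity
    have hden : (R + 1) * (S + 1) - R * (S + 2) + 2 * R + 1 = R + S + 2 := by ring
    rw [hQ, hA0, hB0, hC0, hxi, hg, hd]
    rw [hden]
    field_simp
    ring
  have hQne : Q ≠ 0 := by
    rw [hQval]
    have hnum : (0:ℚ) < R * S * (20 + 34*S + 16*S^2 + 2*S^3 + 34*R + 61*R*S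
        + 32*R*S^2 + 5*R*S^3 + 16*R^2 + 32*R^2*S + 20*R^2*S^2 + 4*R^2*S^3
        + 2*R^3 + 5*R^3*S + 4*R^3*S^2 + R^3*S^3) := by positivity
    have hden : (6 * (g - 1) * (g - 2) * (R + S + 2)) ≠ 0 := by
      have hRS : R + S + 2 ≠ 0 := by positivity
      simp only [mul_ne_zero_iff]
      exact ⟨⟨⟨by norm_num, hg1⟩, hg2⟩, hRS⟩
    exact div_ne_zero (neg_ne_zero.mpr (ne_of_gt hnum)) hden
  refine ⟨hQne, ?_⟩
  have hQne' : -Q ≠ 0 := neg_ne_zero.mpr hQne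
  rw [div_eq_div_iff hQne' (by exact mul_ne_zero (mul_ne_zero hyne hy4) hyx)]
  have hg1' := hg1; have hg2' := hg2; have hgd' := hgd
  simp only [hg, hd] at hg1' hg2' hgd'
  rw [hQval, hP, hAlam, hBlam, hClam, hxi, hg, hd, hx, hy]
  have hRS : R + S + 2 ≠ 0 := by positivity
  have hden : (R + 1) * (S + 1) - R * (S + 2) + 2 * R + 1 = R + S + 2 := by ring
  rw [hden]
  field_simp
  ring
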